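/- The iterated series ∑_{m=1}^∞ ∑_{n=1}^{2m−1} (−4)^(n−1) / ( (2m−1) · 5^(2m−1) ) · C(2m−1, 2n−1) converges and its sum equals π/16, where C(a,b) denotes the binomial coefficient. -/

import Mathlib

open Complex Finset Real

private lemma binom_inner_sum (m : ℕ) :
    ∑ n ∈ Finset.Icc 1 (2 * m + 1), (-4 : ℝ) ^ (n - 1) * (Nat.choose (2 * m + 1) (2 * n - 1) : ℝ)
      = ((1 + 2 * Complex.I) ^ (2 * m + 1)).im / 2 := by
  set g : ℕ → ℝ := fun k => (2 : ℝ) ^ k * (Complex.I ^ k).im * (Nat.choose (2 * m + 1) k : ℝ)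
    with hg
  have h1 : ((1 + 2 * Complex.I) ^ (2 * m + 1)).im = ∑ k ∈ Finset.range (2 * m + 2), g k := by
    rw [add_comm (1 : ℂ), add_pow, Complex.im_sum]
    refine Finset.sum_congr rfl fun k hk => ?_
    rw [one_pow, mul_one, mul_pow, hg]
    rw [show ((2:ℂ)^k * Complex.I^k * ((2*m+1).choose k : ℕ))
        = ((((2:ℝ)^k * ((2*m+1).choose k : ℝ)) : ℝ) : ℂ) * Complex.I ^ k by push_cast; ring]
    rw [Complex.mul_im, Complex.ofReal_re, Complex.ofReal_im]
    ring
  have h2 : ∑ k ∈ Finset.range (2 * m + 2), g k = ∑ k ∈ Finset.range (4 * m + 3), g k := by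
    refine Finset.sum_subset (Finset.range_subset_range.mpr (by omega)) fun k hk hnk => ?_
    simp only [Finset.mem_range] at hk hnk
    have : (2 * m + 1).choose k = 0 := Nat.choose_eq_zero_of_lt (by omega)
    simp [hg, this]
  have h3 : ∑ k ∈ (Finset.range (4 * m + 3)).filter (fun k => Odd k), g k
      = ∑ k ∈ Finset.range (4 * m + 3), g k := by
    refine Finset.sum_filter_of_ne fun k hk hne => ?_
    by_contra hodd
    obtain ⟨p, rfl⟩ := Nat.not_odd_iff_even.mp hodd
    apply hne
    have : (Complex.I ^ (p + p)).im = 0 := by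
      rw [show p + p = 2 * p by ring, pow_mul, Complex.I_sq,
        show ((-1 : ℂ)) ^ p = (((-1 : ℝ) ^ p : ℝ) : ℂ) by push_cast; ring, Complex.ofReal_im]
    simp [hg, this]
  have h4 : ∑ k ∈ (Finset.range (4 * m + 3)).filter (fun k => Odd k), g k
      = ∑ n ∈ Finset.Icc 1 (2 * m + 1),
          2 * ((-4 : ℝ) ^ (n - 1) * (Nat.choose (2 * m + 1) (2 * n - 1) : ℝ)) := by
    refine Finset.sum_nbij' (fun k => (k + 1) / 2) (fun n => 2 * n - 1) ?_ ?_ ?_ ?_ ?_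
    · intro k hk
      simp only [Finset.mem_filter, Finset.mem_range] at hk
      obtain ⟨hk1, p, rfl⟩ := hk
      simp only [Finset.mem_Icc]
      omega
    · intro n hn
      simp only [Finset.mem_Icc] at hn
      simp only [Finset.mem_filter, Finset.mem_range]
      exact ⟨by omega, ⟨n - 1, by omega⟩⟩
    · intro k hk
      simp only [Finset.mem_filter, Finset.mem_range] at hk
      obtain ⟨hk1, p, rfl⟩ := hk
      omega
    · intro n hn
      simp only [Finset.mem_Icc] at hn
      omega
    · intro k hk
      simp only [Finset.mem_filter, Finset.mem_range] at hk
      obtain ⟨hk1, p, rfl⟩ := hk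
      have hidx : (2 * p + 1 + 1) / 2 = p + 1 := by omega
      have hidx2 : 2 * (p + 1) - 1 = 2 * p + 1 := by omega
      rw [hidx, hidx2, hg]
      have hIm : (Complex.I ^ (2 * p + 1)).im = (-1 : ℝ) ^ p := by
        rw [pow_succ, pow_mul, Complex.I_sq,
          show ((-1 : ℂ)) ^ p = (((-1 : ℝ) ^ p : ℝ) : ℂ) by push_cast; ring]
        rw [Complex.mul_im, Complex.I_im, Complex.I_re, Complex.ofReal_re, Complex.ofReal_im]
        ring
      dsimp only
      rw [hIm]
      have : (2 : ℝ) ^ (2 * p + 1) = 2 * 4 ^ p := by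
        rw [pow_succ, pow_mul]; norm_num; ring
      rw [this, show (p + 1) - 1 = p by omega]
      rw [show ((-4 : ℝ)) ^ p = (-1) ^ p * 4 ^ p by rw [← mul_pow]; norm_num]
      ring
  rw [h1, h2, ← h3, h4, ← Finset.mul_sum]
  ring

theorem pi_div_sixteen_binomial_series :
    HasSum (fun m : ℕ =>
      ∑ n ∈ Finset.Icc 1 (2 * m + 1),
        (-4 : ℝ) ^ (n - 1) / ((2 * (m : ℝ) + 1) * 5 ^ (2 * m + 1)) *
          (Nat.choose (2 * m + 1) (2 * n - 1) : ℝ))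
      (Real.pi / 16) := by
  set w : ℂ := (1 + 2 * Complex.I) / 5 with hw
  have hw5 : w = (1 + 2 * Complex.I) / (((5 : ℝ)) : ℂ) := by rw [hw]; norm_num
  have hnorm : ‖-Complex.I * w‖ < 1 := by
    rw [norm_mul, norm_neg, Complex.norm_I, one_mul, hw, norm_div]
    have h5 : ‖(1 + 2 * Complex.I : ℂ)‖ = Real.sqrt 5 := by
      rw [Complex.norm_def]
      norm_num [Complex.normSq_apply]
    have h5' : ‖(5 : ℂ)‖ = 5 := by norm_num
    rw [h5, h5', div_lt_one (by norm_num)]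
    nlinarith [Real.sq_sqrt (show (0:ℝ) ≤ 5 by norm_num), Real.sqrt_nonneg 5]
  have h := Complex.hasSum_arctan hnorm
  have hterm : ∀ n : ℕ, (-1 : ℂ) ^ n * (-Complex.I * w) ^ (2 * n + 1) / ((2 * n + 1 : ℕ) : ℂ)
      = -Complex.I * w ^ (2 * n + 1) / ((2 * n + 1 : ℕ) : ℂ) := by
    intro n
    rw [mul_pow, show ((-Complex.I)) ^ (2 * n + 1) = (-1) ^ n * -Complex.I by
      rw [pow_succ, pow_mul, neg_sq, Complex.I_sq]]
    rw [← mul_assoc, ← mul_assoc, ← mul_pow]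
    norm_num
  simp_rw [hterm] at h
  have h2 := h.mapL Complex.reCLM
  simp only [Complex.reCLM_apply] at h2
  have h3 : ∀ n : ℕ, (-Complex.I * w ^ (2 * n + 1) / ((2 * n + 1 : ℕ) : ℂ)).re
      = (w ^ (2 * n + 1)).im / ((2 * n + 1 : ℕ) : ℝ) := by
    intro n
    rw [show ((2 * n + 1 : ℕ) : ℂ) = (((2 * n + 1 : ℕ) : ℝ) : ℂ) by push_cast; ring,
      Complex.div_ofReal_re, Complex.mul_re, Complex.neg_re, Complex.I_re,
      Complex.neg_im, Complex.I_im]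
    ring
  simp_rw [h3] at h2
  have hne : (1 - w) ≠ 0 := by
    intro hc
    have := congrArg Complex.re hc
    rw [Complex.sub_re, Complex.one_re, hw5, Complex.div_ofReal_re] at this
    simp at this
    norm_num at this
  have hIw : (-Complex.I * w) * Complex.I = w := by
    rw [mul_right_comm, neg_mul, Complex.I_mul_I, neg_neg, one_mul]
  have key2 : (1 + w) / (1 - w) = 1 + Complex.I := by
    rw [div_eq_iff hne, hw]
    have h5 : (5 : ℂ) ≠ 0 := by norm_num
    field_simp
    ring_nf
    rw [Complex.I_sq]
    ring
  have harg : Complex.arg (1 + Complex.I) = Real.pi / 4 := by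
    have hc : ((Real.sqrt 2 : ℝ) : ℂ) *
        (Complex.cos (↑(Real.pi / 4)) + Complex.sin (↑(Real.pi / 4)) * Complex.I)
        = 1 + Complex.I := by
      rw [← Complex.ofReal_cos, ← Complex.ofReal_sin, Real.cos_pi_div_four,
        Real.sin_pi_div_four]
      have h2 : Real.sqrt 2 * (Real.sqrt 2 / 2) = 1 := by
        nlinarith [Real.sq_sqrt (show (0:ℝ) ≤ 2 by norm_num)]
      rw [mul_add, ← mul_assoc]
      simp only [← Complex.ofReal_mul]
      rw [h2]
      push_cast
      ring
    rw [← hc, Complex.arg_real_mul _ (Real.sqrt_pos.mpr (by norm_num)),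
      Complex.arg_cos_add_sin_mul_I ⟨by linarith [Real.pi_pos], by linarith [Real.pi_pos]⟩]
  have hval : (Complex.arctan (-Complex.I * w)).re = Real.pi / 8 := by
    simp only [Complex.arctan]
    rw [hIw, key2, Complex.mul_re]
    have hre0 : (-Complex.I / 2 : ℂ).re = 0 := by simp
    have him0 : (-Complex.I / 2 : ℂ).im = -(1/2) := by simp; norm_num
    rw [hre0, him0, Complex.log_im, harg]
    ring
  rw [hval] at h2
  have h4 := h2.div_const 2
  convert h4 using 1
  · rfl
  · funext m
    have him : (w ^ (2 * m + 1)).im = ((1 + 2 * Complex.I) ^ (2 * m + 1)).im / 5 ^ (2 * m + 1) := by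
      rw [hw5, div_pow, show ((((5 : ℝ)) : ℂ)) ^ (2 * m + 1) = (((5 : ℝ) ^ (2 * m + 1) : ℝ) : ℂ) by
        push_cast; ring, Complex.div_ofReal_im]
    have hstep : ∑ n ∈ Finset.Icc 1 (2 * m + 1),
        (-4 : ℝ) ^ (n - 1) / ((2 * (m : ℝ) + 1) * 5 ^ (2 * m + 1)) *
          (Nat.choose (2 * m + 1) (2 * n - 1) : ℝ)
        = (∑ n ∈ Finset.Icc 1 (2 * m + 1),
            (-4 : ℝ) ^ (n - 1) * (Nat.choose (2 * m + 1) (2 * n - 1) : ℝ))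
          / ((2 * (m : ℝ) + 1) * 5 ^ (2 * m + 1)) := by
      rw [Finset.sum_div]
      exact Finset.sum_congr rfl fun n _ => by ring
    rw [hstep, binom_inner_sum m, him]
    have hm1 : (2 * (m : ℝ) + 1) ≠ 0 := by positivity
    have h5p : ((5 : ℝ) ^ (2 * m + 1)) ≠ 0 := by positivity
    push_cast
    field_simp
  · ring
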